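/- Let G = (N, E) be an unweighted graph, let i ≥ 1 be odd, and consider the graph G_i. Let S be a coalition in G_i with y_i ∉ S and {y_0, …, y_{i−1}} ⊆ S. Then y_i is pivotal for S in the matching game MG(G_i) if and only if the subgraph of G induced by S ∩ N admits a perfect matching. -/
import Mathlib


attribute [local instance] Classical.propDecidable

/-- `M` is a matching of the subgraph of the graph with edge set `E` induced by
the vertex set `S`. -/
def IsMatchingOn {V : Type*} (E : Finset (Sym2 V)) (S : Finset V) (M : Finset (Sym2 V)) : Prop :=
  M ⊆ E ∧ (∀ e ∈ M, ¬ e.IsDiag) ∧ (∀ e ∈ M, ∀ x ∈ e, x ∈ S) ∧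
    (∀ e ∈ M, ∀ f ∈ M, e ≠ f → ∀ x ∈ e, x ∉ f)

/-- Value of a coalition `S` in the weighted matching game on the graph with edge set `E` and
weights `w`: the maximum total weight of a matching in the induced subgraph on `S`. -/
noncomputable def matchVal {V : Type*} (E : Finset (Sym2 V)) (w : Sym2 V → ℝ)
    (S : Finset V) : ℝ :=
  sSup {x : ℝ | ∃ M : Finset (Sym2 V), IsMatchingOn E S M ∧ x = ∑ e ∈ M, w e}

/-- Value of a coalition `S` in the unweighted matching game: the maximum cardinality of a
matching in the induced subgraph on `S`. -/
noncomputable def umatchVal {V : Type*} (E : Finset (Sym2 V)) (S : Finset V) : ℕ :=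
  sSup {k : ℕ | ∃ M : Finset (Sym2 V), IsMatchingOn E S M ∧ k = M.card}

/-- The Shapley value of player `i` in the cooperative game with (finite) player set `N` and
characteristic function `v`. -/
noncomputable def shapley {V : Type*} [DecidableEq V] (N : Finset V) (v : Finset V → ℝ)
    (i : V) : ℝ :=
  (1 / (Nat.factorial N.card) : ℝ) *
    ∑ S ∈ (N.erase i).powerset,
      (Nat.factorial S.card : ℝ) * (Nat.factorial (N.card - S.card - 1) : ℝ) *
        (v (insert i S) - v S)

/-- The raw Shapley value of player `i` in the cooperative game with player set `N` and
characteristic function `v`. -/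
noncomputable def rawShapley {V : Type*} [DecidableEq V] (N : Finset V) (v : Finset V → ℝ)
    (i : V) : ℝ :=
  ∑ S ∈ (N.erase i).powerset,
    (Nat.factorial S.card : ℝ) * (Nat.factorial (N.card - S.card - 1) : ℝ) *
      (v (insert i S) - v S)

/-- The subgraph induced by `S` of the graph with edge set `E` admits a perfect matching. -/
def PerfMatchable {V : Type*} (E : Finset (Sym2 V)) (S : Finset V) : Prop :=
  ∃ M : Finset (Sym2 V), IsMatchingOn E S M ∧ ∀ x ∈ S, ∃ e ∈ M, x ∈ e

/-- Edge set of `G` viewed inside the vertex type `V ⊕ ℕ`, where `Sum.inr j` is the added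
vertex `y_j`. -/
noncomputable def leftEdges {V : Type*} (E : Finset (Sym2 V)) : Finset (Sym2 (V ⊕ ℕ)) :=
  E.image (Sym2.map Sum.inl)

/-- Edge set of the graph `G_i`: the edges of `G`, edges from `y_0` to every vertex of `G`, and
the path edges `{y_{j-1}, y_j}` for `j = 1, …, i`. -/
noncomputable def GiEdges {V : Type*} [Fintype V] (E : Finset (Sym2 V)) (i : ℕ) : Finset (Sym2 (V ⊕ ℕ)) :=
  leftEdges E ∪ Finset.univ.image (fun x : V => s(Sum.inr 0, Sum.inl x)) ∪
    (Finset.Icc 1 i).image (fun j : ℕ => s(Sum.inr (j - 1), Sum.inr j))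

/-- Vertex (player) set of the graph `G_i`: the vertices of `G` together with `y_0, …, y_i`. -/
noncomputable def GiPlayers (V : Type*) [Fintype V] (i : ℕ) : Finset (V ⊕ ℕ) :=
  Finset.univ.image Sum.inl ∪ (Finset.range (i + 1)).image Sum.inr

section AuxMatching

variable {V : Type*}

lemma isMatchingOn_empty (E : Finset (Sym2 V)) (S : Finset V) : IsMatchingOn E S ∅ :=
  ⟨by simp, by simp, by simp, by simp⟩

lemma umatch_bddAbove (E : Finset (Sym2 V)) (S : Finset V) :
    BddAbove {k : ℕ | ∃ M, IsMatchingOn E S M ∧ k = M.card} := by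
  refine ⟨E.card, fun k hk => ?_⟩
  obtain ⟨M, hM, rfl⟩ := hk
  exact Finset.card_le_card hM.1

lemma le_umatchVal {E : Finset (Sym2 V)} {S : Finset V} {M : Finset (Sym2 V)}
    (hM : IsMatchingOn E S M) : M.card ≤ umatchVal E S :=
  le_csSup (umatch_bddAbove E S) ⟨M, hM, rfl⟩

lemma umatchVal_le {E : Finset (Sym2 V)} {S : Finset V} {k : ℕ}
    (h : ∀ M, IsMatchingOn E S M → M.card ≤ k) : umatchVal E S ≤ k := by
  have h0 : (0:ℕ) ∈ {k : ℕ | ∃ M, IsMatchingOn E S M ∧ k = M.card} :=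
    ⟨∅, isMatchingOn_empty E S, by simp⟩
  apply csSup_le ⟨0, h0⟩
  rintro x ⟨M, hM, rfl⟩; exact h M hM

lemma exists_max_matching (E : Finset (Sym2 V)) (S : Finset V) :
    ∃ M, IsMatchingOn E S M ∧ M.card = umatchVal E S := by
  have := Nat.sSup_mem (s := {k : ℕ | ∃ M, IsMatchingOn E S M ∧ k = M.card})
    ⟨0, ∅, isMatchingOn_empty E S, by simp⟩ (umatch_bddAbove E S)
  obtain ⟨M, hM, h⟩ := this
  exact ⟨M, hM, h.symm⟩

lemma umatchVal_mono {E : Finset (Sym2 V)} {S T : Finset V} (h : S ⊆ T) :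
    umatchVal E S ≤ umatchVal E T :=
  umatchVal_le fun M hM =>
    le_umatchVal ⟨hM.1, hM.2.1, fun e he x hx => h (hM.2.2.1 e he x hx), hM.2.2.2⟩

lemma matching_subset {E : Finset (Sym2 V)} {S : Finset V}
    {M M' : Finset (Sym2 V)} (h : M' ⊆ M) (hM : IsMatchingOn E S M) : IsMatchingOn E S M' :=
  ⟨h.trans hM.1, fun e he => hM.2.1 e (h he), fun e he => hM.2.2.1 e (h he),
    fun e he f hf => hM.2.2.2 e (h he) f (h hf)⟩

/-- endpoints of an edge as a finset -/
noncomputable def endp [DecidableEq V] : Sym2 V → Finset V :=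
  Sym2.lift ⟨fun a b => {a, b}, fun a b => Finset.pair_comm a b⟩

@[simp] lemma endp_mk [DecidableEq V] (a b : V) : endp s(a, b) = {a, b} := rfl

lemma mem_endp [DecidableEq V] {x : V} {e : Sym2 V} : x ∈ endp e ↔ x ∈ e := by
  induction e using Sym2.ind with
  | _ a b => simp [Sym2.mem_iff]

lemma biUnion_endp_subset [DecidableEq V] {E : Finset (Sym2 V)} {S : Finset V}
    {M : Finset (Sym2 V)} (hM : IsMatchingOn E S M) : M.biUnion endp ⊆ S := by
  intro x hx
  obtain ⟨e, he, hxe⟩ := Finset.mem_biUnion.mp hx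
  exact hM.2.2.1 e he x (mem_endp.mp hxe)

lemma card_biUnion_endp [DecidableEq V] {E : Finset (Sym2 V)} {S : Finset V}
    {M : Finset (Sym2 V)} (hM : IsMatchingOn E S M) :
    (M.biUnion endp).card = 2 * M.card := by
  have hdisj : ∀ e ∈ M, ∀ f ∈ M, e ≠ f → Disjoint (endp e) (endp f) := by
    intro e he f hf hef
    rw [Finset.disjoint_left]
    intro x hxe hxf
    exact hM.2.2.2 e he f hf hef x (mem_endp.mp hxe) (mem_endp.mp hxf)
  have h2 : ∀ e ∈ M, (endp e).card = 2 := by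
    intro e he
    induction e using Sym2.ind with
    | _ a b =>
      have : a ≠ b := by simpa [Sym2.mk_isDiag_iff] using hM.2.1 _ he
      simp [Finset.card_insert_of_notMem, this]
  rw [Finset.card_biUnion hdisj, Finset.sum_congr rfl h2]
  simp [mul_comm]

lemma two_mul_card_le [DecidableEq V] {E : Finset (Sym2 V)} {S : Finset V}
    {M : Finset (Sym2 V)} (hM : IsMatchingOn E S M) : 2 * M.card ≤ S.card := by
  rw [← card_biUnion_endp hM]
  exact Finset.card_le_card (biUnion_endp_subset hM)

lemma perf_card [DecidableEq V] {E : Finset (Sym2 V)} {S : Finset V}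
    {M : Finset (Sym2 V)} (hM : IsMatchingOn E S M)
    (hcov : ∀ x ∈ S, ∃ e ∈ M, x ∈ e) : 2 * M.card = S.card := by
  have hsub2 : S ⊆ M.biUnion endp := by
    intro x hx
    obtain ⟨e, he, hxe⟩ := hcov x hx
    exact Finset.mem_biUnion.mpr ⟨e, he, mem_endp.mpr hxe⟩
  have h1 := card_biUnion_endp hM
  have h2 := Finset.card_le_card (biUnion_endp_subset hM)
  have h3 := Finset.card_le_card hsub2
  omega

lemma matching_insert {E : Finset (Sym2 V)} {S : Finset V} {M : Finset (Sym2 V)} {e0 : Sym2 V}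
    (hM : IsMatchingOn E S M) (he : e0 ∈ E) (hd : ¬ e0.IsDiag) (hv : ∀ x ∈ e0, x ∈ S)
    (hdisj : ∀ f ∈ M, ∀ x ∈ e0, x ∉ f) :
    IsMatchingOn E S (insert e0 M) ∧ (insert e0 M).card = M.card + 1 := by
  classical
  have he0M : e0 ∉ M := by
    intro h
    have hex : ∃ a, a ∈ e0 := by
      induction e0 using Sym2.ind with
      | _ a b => exact ⟨a, by simp⟩
    obtain ⟨a, ha⟩ := hex
    exact hdisj e0 h a ha ha
  constructor
  · refine ⟨?_, ?_, ?_, ?_⟩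
    · intro e he'
      rcases Finset.mem_insert.mp he' with rfl | h
      · exact he
      · exact hM.1 h
    · intro e he'
      rcases Finset.mem_insert.mp he' with rfl | h
      · exact hd
      · exact hM.2.1 e h
    · intro e he' x hx
      rcases Finset.mem_insert.mp he' with rfl | h
      · exact hv x hx
      · exact hM.2.2.1 e h x hx
    · intro e he' f hf' hef x hxe hxf
      rcases Finset.mem_insert.mp he' with rfl | he'' <;>
        rcases Finset.mem_insert.mp hf' with rfl | hf''
      · exact hef rfl
      · exact hdisj f hf'' x hxe hxf
      · exact hdisj e he'' x hxf hxe
      · exact hM.2.2.2 e he'' f hf'' hef x hxe hxf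
  · rw [Finset.card_insert_of_notMem he0M]

end AuxMatching

section AuxGi

lemma sym2_exists {α : Type*} (e : Sym2 α) : ∃ a b, e = s(a, b) := by
  induction e using Sym2.ind with
  | _ a b => exact ⟨a, b, rfl⟩

lemma mem_leftEdges_iff {V : Type*} {E : Finset (Sym2 V)} {e : Sym2 (V ⊕ ℕ)} :
    e ∈ leftEdges E ↔ ∃ a b : V, s(a, b) ∈ E ∧ e = s(Sum.inl a, Sum.inl b) := by
  constructor
  · intro he
    obtain ⟨e', he', rfl⟩ := Finset.mem_image.mp he
    obtain ⟨a, b, rfl⟩ := sym2_exists e'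
    exact ⟨a, b, he', by simp⟩
  · rintro ⟨a, b, hab, rfl⟩
    exact Finset.mem_image.mpr ⟨s(a, b), hab, by simp⟩

lemma leftEdges_left {V : Type*} {E : Finset (Sym2 V)} {e : Sym2 (V ⊕ ℕ)}
    (he : e ∈ leftEdges E) {x} (hx : x ∈ e) : x.isLeft := by
  obtain ⟨a, b, -, rfl⟩ := mem_leftEdges_iff.mp he
  rcases Sym2.mem_iff.mp hx with rfl | rfl <;> rfl

lemma mem_GiEdges {V : Type*} [Fintype V] {E : Finset (Sym2 V)} {i : ℕ} {e : Sym2 (V ⊕ ℕ)} :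
    e ∈ GiEdges E i ↔ e ∈ leftEdges E ∨ (∃ x : V, e = s(Sum.inr 0, Sum.inl x)) ∨
      ∃ j, 1 ≤ j ∧ j ≤ i ∧ e = s(Sum.inr (j - 1), Sum.inr j) := by
  unfold GiEdges
  simp only [Finset.mem_union, Finset.mem_image, Finset.mem_univ, true_and, Finset.mem_Icc]
  constructor
  · rintro ((h | ⟨x, rfl⟩) | ⟨j, ⟨h1, h2⟩, rfl⟩)
    · exact Or.inl h
    · exact Or.inr (Or.inl ⟨x, rfl⟩)
    · exact Or.inr (Or.inr ⟨j, h1, h2, rfl⟩)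
  · rintro (h | ⟨x, rfl⟩ | ⟨j, h1, h2, rfl⟩)
    · exact Or.inl (Or.inl h)
    · exact Or.inl (Or.inr ⟨x, rfl⟩)
    · exact Or.inr ⟨j, ⟨h1, h2⟩, rfl⟩

noncomputable def pathM (V : Type*) (a b : ℕ) : Finset (Sym2 (V ⊕ ℕ)) :=
  (Finset.range b).image (fun k => s((Sum.inr (a + 2*k) : V ⊕ ℕ), Sum.inr (a + 2*k + 1)))

lemma mem_pathM {V : Type*} {a b : ℕ} {e : Sym2 (V ⊕ ℕ)} :
    e ∈ pathM V a b ↔ ∃ k < b, e = s(Sum.inr (a + 2*k), Sum.inr (a + 2*k + 1)) := by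
  simp [pathM, eq_comm]

lemma pathM_card (V : Type*) (a b : ℕ) : (pathM V a b).card = b := by
  rw [pathM, Finset.card_image_of_injOn, Finset.card_range]
  intro k _ k' _ h
  simp only [Sym2.eq_iff, Sum.inr.injEq] at h
  omega

lemma construct {V : Type*} [Fintype V] [DecidableEq V] {E : Finset (Sym2 V)} {i : ℕ}
    {T : Finset (V ⊕ ℕ)} {ML : Finset (Sym2 (V ⊕ ℕ))}
    (hML : IsMatchingOn (leftEdges E) (T.filter (fun x => x.isLeft)) ML)
    (a b : ℕ) (hb : a + 2*b ≤ i + 1)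
    (hmem : ∀ j, a ≤ j → j < a + 2*b → (Sum.inr j : V ⊕ ℕ) ∈ T) :
    IsMatchingOn (GiEdges E i) T (ML ∪ pathM V a b) ∧
      (ML ∪ pathM V a b).card = ML.card + b := by
  classical
  have hMLle : ML ⊆ leftEdges E := hML.1
  have hdisjset : Disjoint ML (pathM V a b) := by
    rw [Finset.disjoint_left]
    intro e he hp
    obtain ⟨k, hk, rfl⟩ := mem_pathM.mp hp
    have := leftEdges_left (hMLle he) (x := Sum.inr (a + 2*k)) (by simp)
    simp at this
  constructor
  · refine ⟨?_, ?_, ?_, ?_⟩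
    · intro e he
      rcases Finset.mem_union.mp he with h | h
      · exact mem_GiEdges.mpr (Or.inl (hMLle h))
      · obtain ⟨k, hk, rfl⟩ := mem_pathM.mp h
        refine mem_GiEdges.mpr (Or.inr (Or.inr ⟨a + 2*k + 1, by omega, by omega, ?_⟩))
        rw [Nat.add_sub_cancel]
    · intro e he
      rcases Finset.mem_union.mp he with h | h
      · exact hML.2.1 e h
      · obtain ⟨k, hk, rfl⟩ := mem_pathM.mp h
        simp [Sym2.mk_isDiag_iff]
    · intro e he x hx
      rcases Finset.mem_union.mp he with h | h
      · exact (Finset.mem_filter.mp (hML.2.2.1 e h x hx)).1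
      · obtain ⟨k, hk, rfl⟩ := mem_pathM.mp h
        rcases Sym2.mem_iff.mp hx with rfl | rfl
        · exact hmem _ (by omega) (by omega)
        · exact hmem _ (by omega) (by omega)
    · intro e he f hf hef x hxe hxf
      rcases Finset.mem_union.mp he with h | h <;> rcases Finset.mem_union.mp hf with h' | h'
      · exact hML.2.2.2 e h f h' hef x hxe hxf
      · obtain ⟨k, hk, rfl⟩ := mem_pathM.mp h'
        have hxl := leftEdges_left (hMLle h) hxe
        rcases Sym2.mem_iff.mp hxf with rfl | rfl <;> simp at hxl
      · obtain ⟨k, hk, rfl⟩ := mem_pathM.mp h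
        have hxl := leftEdges_left (hMLle h') hxf
        rcases Sym2.mem_iff.mp hxe with rfl | rfl <;> simp at hxl
      · obtain ⟨k, hk, rfl⟩ := mem_pathM.mp h
        obtain ⟨k', hk', rfl⟩ := mem_pathM.mp h'
        have hkk : k ≠ k' := by
          intro h''; subst h''; exact hef rfl
        rcases Sym2.mem_iff.mp hxe with rfl | rfl <;>
          rcases Sym2.mem_iff.mp hxf with h'' | h'' <;>
            (simp only [Sum.inr.injEq] at h''; omega)
  · rw [Finset.card_union_of_disjoint hdisjset, pathM_card]

noncomputable def ridx {V : Type*} : Sym2 (V ⊕ ℕ) → ℕ :=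
  Sym2.lift ⟨fun a b => max (Sum.elim (fun _ => 0) id a) (Sum.elim (fun _ => 0) id b),
    fun a b => max_comm _ _⟩

@[simp] lemma ridx_mk {V : Type*} (a b : V ⊕ ℕ) :
    ridx s(a, b) = max (Sum.elim (fun _ => 0) id a) (Sum.elim (fun _ => 0) id b) := rfl

lemma card_right_le {V : Type*} [Fintype V] {E : Finset (Sym2 V)} {i : ℕ}
    {T : Finset (V ⊕ ℕ)} {M : Finset (Sym2 (V ⊕ ℕ))}
    (hM : IsMatchingOn (GiEdges E i) T M) (hleft : ∀ e ∈ M, e ∉ leftEdges E) :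
    M.card ≤ i / 2 + 1 := by
  classical
  have key : ∀ e ∈ M, (∃ x : V, e = s(Sum.inr 0, Sum.inl x)) ∨
      ∃ j, 1 ≤ j ∧ j ≤ i ∧ e = s(Sum.inr (j - 1), Sum.inr j) := by
    intro e he
    rcases mem_GiEdges.mp (hM.1 he) with h | h
    · exact absurd h (hleft e he)
    · exact h
  have hridx : ∀ e ∈ M, ridx e / 2 ∈ Finset.range (i / 2 + 1) := by
    intro e he
    rcases key e he with ⟨x, rfl⟩ | ⟨j, h1, h2, rfl⟩
    · simp
    · simp only [ridx_mk, Sum.elim_inr, id, Finset.mem_range]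
      have : max (j - 1) j = j := by omega
      rw [this]
      have := Nat.div_le_div_right (c := 2) h2
      omega
  have hne : ∀ e ∈ M, ∀ f ∈ M, e ≠ f → ∀ x, x ∈ e → x ∈ f → False := fun e he f hf hef x hx hx' =>
    hM.2.2.2 e he f hf hef x hx hx'
  calc M.card ≤ (Finset.range (i / 2 + 1)).card := by
        apply Finset.card_le_card_of_injOn (fun e => ridx e / 2) hridx
        intro e he f hf hfe
        by_contra hef
        rcases key e (Finset.mem_coe.mp he) with ⟨x, rfl⟩ | ⟨j, h1, h2, rfl⟩ <;>
          rcases key f (Finset.mem_coe.mp hf) with ⟨x', rfl⟩ | ⟨j', h1', h2', rfl⟩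
        · exact hne _ he _ hf hef (Sum.inr 0) (by simp) (by simp)
        · simp only [ridx_mk, Sum.elim_inr, Sum.elim_inl, id] at hfe
          have hj : j' = 1 := by omega
          subst hj
          exact hne _ he _ hf hef (Sum.inr 0) (by simp) (by simp)
        · simp only [ridx_mk, Sum.elim_inr, Sum.elim_inl, id] at hfe
          have hj : j = 1 := by omega
          subst hj
          exact hne _ he _ hf hef (Sum.inr 0) (by simp) (by simp)
        · simp only [ridx_mk, Sum.elim_inr, id] at hfe
          have hmj : max (j - 1) j = j := by omega
          have hmj' : max (j' - 1) j' = j' := by omega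
          rw [hmj, hmj'] at hfe
          have hjj : j ≠ j' := by
            intro h; exact hef (by rw [h])
          have : j' = j + 1 ∨ j = j' + 1 := by omega
          rcases this with h | h
          · refine hne _ he _ hf hef (Sum.inr j) (by simp) ?_
            subst h; simp
          · refine hne _ he _ hf hef (Sum.inr j') ?_ (by simp)
            subst h; simp
    _ = i / 2 + 1 := Finset.card_range _

lemma left_part {V : Type*} [Fintype V] {E : Finset (Sym2 V)} {i : ℕ}
    {T : Finset (V ⊕ ℕ)} {L : Finset (V ⊕ ℕ)} {M Ml : Finset (Sym2 (V ⊕ ℕ))}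
    (hM : IsMatchingOn (GiEdges E i) T M) (hT : ∀ x ∈ T, x.isLeft → x ∈ L)
    (hMl : Ml ⊆ M) (hle : ∀ e ∈ Ml, e ∈ leftEdges E) :
    IsMatchingOn (leftEdges E) L Ml := by
  refine ⟨hle, ?_, ?_, ?_⟩
  · intro e he; exact hM.2.1 e (hMl he)
  · intro e he x hx
    exact hT x (hM.2.2.1 e (hMl he) x hx) (leftEdges_left (hle e he) hx)
  · intro e he f hf hef
    exact hM.2.2.2 e (hMl he) f (hMl hf) hef

end AuxGi

set_option maxHeartbeats 1000000 in
/-- For odd `i`, a coalition `S` of `G_i` containing `y_0, …, y_{i-1}` but not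
`y_i` is pivotal for `y_i` iff the subgraph of `G` induced by `S ∩ N` is perfectly matchable. -/
theorem pivotal_Gi_odd {V : Type*} [Fintype V] [DecidableEq V]
    (E : Finset (Sym2 V)) (hloop : ∀ e ∈ E, ¬ e.IsDiag)
    (i : ℕ) (hi : Odd i)
    (S : Finset (V ⊕ ℕ)) (hS : S ⊆ GiPlayers V i)
    (hyi : Sum.inr i ∉ S) (hys : ∀ j < i, Sum.inr j ∈ S) :
    (umatchVal (GiEdges E i) (insert (Sum.inr i) S) = umatchVal (GiEdges E i) S + 1) ↔
      PerfMatchable (leftEdges E) (S.filter (fun x => x.isLeft)) := by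
  classical
  obtain ⟨m, hm⟩ := hi
  set L := S.filter (fun x => x.isLeft) with hL
  have hi1 : 1 ≤ i := by omega
  have hLsub : L ⊆ S := Finset.filter_subset _ _
  have hfilter_insert : (insert (Sum.inr i) S).filter (fun x => x.isLeft) = L := by
    rw [Finset.filter_insert]
    simp [hL]
  have hScard : S.card = L.card + i := by
    have hdecomp : S = L ∪ (Finset.range i).image Sum.inr := by
      ext x
      simp only [Finset.mem_union, Finset.mem_image, Finset.mem_range]
      constructor
      · intro hx
        cases x with
        | inl v => exact Or.inl (Finset.mem_filter.mpr ⟨hx, rfl⟩)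
        | inr j =>
          right
          refine ⟨j, ?_, rfl⟩
          have hgp := hS hx
          simp only [GiPlayers, Finset.mem_union, Finset.mem_image, Finset.mem_range,
            Finset.mem_univ, true_and] at hgp
          rcases hgp with ⟨v, h⟩ | ⟨j', hj', h⟩
          · exact absurd h (by simp)
          · have hjj : j' = j := by injection h
            have hne : j ≠ i := fun h' => hyi (h' ▸ hx)
            omega
      · rintro (hx | ⟨j, hj, rfl⟩)
        · exact hLsub hx
        · exact hys j hj
    have hdis : Disjoint L ((Finset.range i).image Sum.inr) := by
      rw [Finset.disjoint_left]
      intro x hx hx'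
      obtain ⟨j, -, rfl⟩ := Finset.mem_image.mp hx'
      have := (Finset.mem_filter.mp hx).2
      simp at this
    rw [hdecomp, Finset.card_union_of_disjoint hdis,
      Finset.card_image_of_injective _ Sum.inr_injective, Finset.card_range]
  have hinsert_card : (insert (Sum.inr i) S).card = L.card + i + 1 := by
    rw [Finset.card_insert_of_notMem hyi, hScard]
  have hmemins : ∀ j, 0 ≤ j → j < 0 + 2 * (m + 1) → (Sum.inr j : V ⊕ ℕ) ∈ insert (Sum.inr i) S := by
    intro j _ hj
    rcases Nat.lt_or_ge j i with h | h
    · exact Finset.mem_insert_of_mem (hys j h)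
    · have : j = i := by omega
      subst this
      exact Finset.mem_insert_self _ _
  by_cases hPM : PerfMatchable (leftEdges E) L
  · -- perfectly matchable: pivotal
    obtain ⟨MP, hMP, hcov⟩ := hPM
    have hperf : 2 * MP.card = L.card := perf_card hMP hcov
    have hBub : umatchVal (GiEdges E i) S ≤ MP.card + m := by
      apply umatchVal_le
      intro M hM
      have := two_mul_card_le hM
      rw [hScard] at this
      omega
    have hMPS : IsMatchingOn (leftEdges E) (S.filter (fun x => x.isLeft)) MP := by
      rw [← hL]; exact hMP
    obtain ⟨hMm, hMc⟩ := construct (i := i) hMPS 1 m (by omega)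
      (fun j h1 h2 => hys j (by omega))
    have hBlb : MP.card + m ≤ umatchVal (GiEdges E i) S := by
      have := le_umatchVal hMm
      omega
    have hMP' : IsMatchingOn (leftEdges E) ((insert (Sum.inr i) S).filter (fun x => x.isLeft)) MP := by
      rw [hfilter_insert]; exact hMP
    obtain ⟨hMm', hMc'⟩ := construct (i := i) hMP' 0 (m + 1) (by omega) hmemins
    have hAval : umatchVal (GiEdges E i) (insert (Sum.inr i) S) = MP.card + m + 1 := by
      refine le_antisymm ?_ ?_
      · apply umatchVal_le
        intro M hM
        have := two_mul_card_le hM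
        rw [hinsert_card] at this
        omega
      · have := le_umatchVal hMm'
        omega
    constructor
    · intro _
      exact ⟨MP, hMP, hcov⟩
    · intro _
      have hB : umatchVal (GiEdges E i) S = MP.card + m := le_antisymm hBub hBlb
      rw [hAval, hB]
  · -- not perfectly matchable: not pivotal
    have hub : ∀ (T : Finset (V ⊕ ℕ)) (M : Finset (Sym2 (V ⊕ ℕ))),
        IsMatchingOn (GiEdges E i) T M → (∀ x ∈ T, x.isLeft → x ∈ L) →
        M.card ≤ umatchVal (leftEdges E) L + (m + 1) := by
      intro T M hM hT
      set Ml := M.filter (· ∈ leftEdges E) with hMldef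
      have hMlsub : Ml ⊆ M := Finset.filter_subset _ _
      have h1 : M.card = Ml.card + (M \ Ml).card := by
        rw [Finset.card_sdiff_of_subset hMlsub]
        have := Finset.card_le_card hMlsub
        omega
      have h2 : Ml.card ≤ umatchVal (leftEdges E) L :=
        le_umatchVal (left_part hM hT hMlsub (fun e he => (Finset.mem_filter.mp he).2))
      have h3 : (M \ Ml).card ≤ i / 2 + 1 := by
        apply card_right_le (matching_subset Finset.sdiff_subset hM)
        intro e he hl
        have h5 := Finset.mem_sdiff.mp he
        exact h5.2 (Finset.mem_filter.mpr ⟨h5.1, hl⟩)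
      have h4 : i / 2 = m := by omega
      omega
    have hTins : ∀ x ∈ insert (Sum.inr i) S, x.isLeft → x ∈ L := by
      intro x hx hxl
      rcases Finset.mem_insert.mp hx with rfl | hx'
      · simp at hxl
      · exact Finset.mem_filter.mpr ⟨hx', hxl⟩
    have hA : umatchVal (GiEdges E i) (insert (Sum.inr i) S) =
        umatchVal (leftEdges E) L + (m + 1) := by
      refine le_antisymm (umatchVal_le fun M hM => hub _ M hM hTins) ?_
      obtain ⟨ML, hML, hMLcard⟩ := exists_max_matching (leftEdges E) L
      have hML' : IsMatchingOn (leftEdges E)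
          ((insert (Sum.inr i) S).filter (fun x => x.isLeft)) ML := by
        rw [hfilter_insert]; exact hML
      obtain ⟨hMm, hMc⟩ := construct (i := i) hML' 0 (m + 1) (by omega) hmemins
      have := le_umatchVal hMm
      omega
    obtain ⟨ML, hML, hMLcard⟩ := exists_max_matching (leftEdges E) L
    have hexp : ∃ x ∈ L, ∀ e ∈ ML, x ∉ e := by
      by_contra h
      push_neg at h
      refine hPM ⟨ML, hML, fun x hx => ?_⟩
      obtain ⟨e, he, he'⟩ := h x hx
      exact ⟨e, he, he'⟩
    obtain ⟨x, hxL, hxML⟩ := hexp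
    obtain ⟨v, rfl⟩ : ∃ v, x = Sum.inl v := by
      have hleft := (Finset.mem_filter.mp hxL).2
      cases x with
      | inl v => exact ⟨v, rfl⟩
      | inr j => simp at hleft
    have hMLS : IsMatchingOn (leftEdges E) (S.filter (fun x => x.isLeft)) ML := by
      rw [← hL]; exact hML
    obtain ⟨hMm, hMc⟩ := construct (i := i) hMLS 1 m (by omega)
      (fun j h1 h2 => hys j (by omega))
    have hins := matching_insert (e0 := s(Sum.inr 0, Sum.inl v)) hMm
      (mem_GiEdges.mpr (Or.inr (Or.inl ⟨v, rfl⟩)))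
      (by simp [Sym2.mk_isDiag_iff])
      (by
        intro y hy
        rcases Sym2.mem_iff.mp hy with rfl | rfl
        · exact hys 0 (by omega)
        · exact hLsub hxL)
      (by
        intro f hf y hy
        rcases Finset.mem_union.mp hf with h | h
        · rcases Sym2.mem_iff.mp hy with rfl | rfl
          · intro hmem'
            have := leftEdges_left (hML.1 h) hmem'
            simp at this
          · exact hxML f h
        · obtain ⟨k, hk, rfl⟩ := mem_pathM.mp h
          rcases Sym2.mem_iff.mp hy with rfl | rfl <;>
            · intro hmem'
              rcases Sym2.mem_iff.mp hmem' with h' | h' <;> simp at h' <;> omega)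
    have hBlb : umatchVal (leftEdges E) L + (m + 1) ≤ umatchVal (GiEdges E i) S := by
      have := le_umatchVal hins.1
      rw [hins.2, hMc, hMLcard] at this
      omega
    have hBub : umatchVal (GiEdges E i) S ≤ umatchVal (GiEdges E i) (insert (Sum.inr i) S) :=
      umatchVal_mono (Finset.subset_insert _ _)
    constructor
    · intro h
      rw [hA] at h
      omega
    · intro h
      exact absurd h hPM
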